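/- Neyman orthogonality (Gateaux derivative vanishes): let σ(z) ⊆ σ(x'), let e = E[q'|x'], let W = e − F where F is σ(x')-measurable, and let g be continuously differentiable with bounded derivative. For any integrable σ(x')-measurable δ, define M(λ) = E[ A − g(W + λδ) − g'(W + λδ)·(q' − e − λδ) | z ], where A is integrable. Then M is differentiable at λ = 0 with M'(0) = 0 a.s. -/

import Mathlib

open MeasureTheory Filter
open scoped ENNReal MeasureTheory

lemma aux_condexp_tendsto {Ω : Type*} {mz : MeasurableSpace Ω} [mΩ : MeasurableSpace Ω]
    {μ : Measure Ω} [IsProbabilityMeasure μ] (hmz : mz ≤ mΩ)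
    (h : ℕ → Ω → ℝ) (hmeas : ∀ n, Measurable[mΩ] (h n))
    (b : Ω → ℝ) (hb : Integrable b μ)
    (hbound : ∀ n a, |h n a| ≤ b a)
    (hlim : ∀ a, Tendsto (fun n => h n a) atTop (nhds 0)) :
    ∀ᵐ a ∂μ, Tendsto (fun n => (μ[h n|mz]) a) atTop (nhds 0) := by
  set H : ℕ → Ω → ℝ := fun n a => ⨆ m, |h (n + m) a| with hH
  have hbdd : ∀ n a, BddAbove (Set.range fun m => |h (n + m) a|) := by
    intro n a; exact ⟨b a, by rintro x ⟨m, rfl⟩; exact hbound _ a⟩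
  have hH0 : ∀ n a, 0 ≤ H n a := fun n a =>
    (abs_nonneg (h (n+0) a)).trans (le_ciSup (hbdd n a) 0)
  have hHb : ∀ n a, H n a ≤ b a := fun n a => ciSup_le fun m => hbound _ a
  have hHmeas : ∀ n, Measurable[mΩ] (H n) := fun n => Measurable.iSup fun m => (hmeas _).abs
  have hHint : ∀ n, Integrable (H n) μ := fun n =>
    hb.mono' ((hHmeas n).aestronglyMeasurable (μ := μ))
      (Filter.Eventually.of_forall fun a => by
        rw [Real.norm_eq_abs, abs_of_nonneg (hH0 n a)]; exact hHb n a)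
  have hHanti : ∀ a, Antitone fun n => H n a := by
    intro a
    refine antitone_nat_of_succ_le fun n => ciSup_le fun m => ?_
    have hnm : n + 1 + m = n + (m + 1) := by omega
    rw [hnm]
    exact le_ciSup (hbdd n a) (m + 1)
  have hHtend : ∀ a, Tendsto (fun n => H n a) atTop (nhds 0) := by
    intro a
    rw [Metric.tendsto_atTop]
    intro ε hε
    obtain ⟨N, hN⟩ := Metric.tendsto_atTop.1 (hlim a) (ε / 2) (by positivity)
    refine ⟨N, fun n hn => ?_⟩
    rw [Real.dist_eq, sub_zero, abs_of_nonneg (hH0 n a)]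
    have hle : H n a ≤ ε / 2 := ciSup_le fun m => by
      have := hN (n + m) (le_trans hn (Nat.le_add_right _ _))
      rw [Real.dist_eq, sub_zero] at this
      exact this.le
    linarith
  have hinttend : Tendsto (fun n => ∫ a, H n a ∂μ) atTop (nhds 0) := by
    have := tendsto_integral_of_dominated_convergence b
      (fun n => (hHmeas n).aestronglyMeasurable) hb
      (fun n => Filter.Eventually.of_forall fun a => by
        rw [Real.norm_eq_abs, abs_of_nonneg (hH0 n a)]; exact hHb n a)
      (Filter.Eventually.of_forall hHtend)
    simpa using this
  set G : ℕ → Ω → ℝ := fun n => μ[H n|mz] with hG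
  have hGint : ∀ n, ∫ a, G n a ∂μ = ∫ a, H n a ∂μ := fun n =>
    integral_condExp (f := H n) hmz
  have hGm : ∀ n, Measurable[mΩ] (G n) := fun n =>
    (stronglyMeasurable_condExp.mono hmz).measurable
  have hGnn0 : ∀ n, 0 ≤ᵐ[μ] G n := fun n =>
    condExp_nonneg (Filter.Eventually.of_forall (hH0 n))
  have hGnn : ∀ᵐ a ∂μ, ∀ n, 0 ≤ G n a := by
    rw [ae_all_iff]; exact fun n => hGnn0 n
  have hGanti : ∀ᵐ a ∂μ, ∀ n, G (n + 1) a ≤ G n a := by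
    rw [ae_all_iff]
    exact fun n => condExp_mono (hHint (n + 1)) (hHint n)
      (Filter.Eventually.of_forall fun a => hHanti a (Nat.le_succ n))
  set G' : ℕ → Ω → ℝ≥0∞ := fun n a => ENNReal.ofReal (G n a) with hG'
  have hL : ∀ᵐ a ∂μ, (⨅ n, G' n a) = 0 := by
    have hmeasL : Measurable[mΩ] fun a => ⨅ n, G' n a :=
      Measurable.iInf fun n => (hGm n).ennreal_ofReal
    have hle : ∀ n, ∫⁻ a, (⨅ m, G' m a) ∂μ ≤ ENNReal.ofReal (∫ a, H n a ∂μ) := by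
      intro n
      have h1 : ∫⁻ a, (⨅ m, G' m a) ∂μ ≤ ∫⁻ a, G' n a ∂μ :=
        lintegral_mono fun a => iInf_le _ n
      have h2 : ENNReal.ofReal (∫ a, G n a ∂μ) = ∫⁻ a, G' n a ∂μ :=
        ofReal_integral_eq_lintegral_ofReal integrable_condExp (hGnn0 n)
      rw [hGint n] at h2
      exact h1.trans h2.ge
    have h3 : Tendsto (fun n => ENNReal.ofReal (∫ a, H n a ∂μ)) atTop (nhds 0) := by
      simpa using ENNReal.tendsto_ofReal hinttend
    have h5 : ∫⁻ a, (⨅ n, G' n a) ∂μ = 0 := le_zero_iff.mp (ge_of_tendsto' h3 hle)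
    exact (lintegral_eq_zero_iff hmeasL).mp h5
  have hGtend : ∀ᵐ a ∂μ, Tendsto (fun n => G n a) atTop (nhds 0) := by
    filter_upwards [hGnn, hGanti, hL] with a h0 hmono hinf
    have hanti' : Antitone fun n => G' n a := antitone_nat_of_succ_le fun n =>
      ENNReal.ofReal_le_ofReal (hmono n)
    have htd : Tendsto (fun n => G' n a) atTop (nhds (⨅ n, G' n a)) :=
      tendsto_atTop_iInf hanti'
    rw [hinf] at htd
    have htd' : Tendsto (fun n => (G' n a).toReal) atTop (nhds ((0 : ℝ≥0∞).toReal)) :=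
      (ENNReal.tendsto_toReal (by simp)).comp htd
    simp only [ENNReal.toReal_zero] at htd'
    refine htd'.congr fun n => ?_
    simp only [hG']
    exact ENNReal.toReal_ofReal (h0 n)
  have hhint : ∀ n, Integrable (h n) μ := fun n =>
    hb.mono' ((hmeas n).aestronglyMeasurable (μ := μ))
      (Filter.Eventually.of_forall fun a => by
        rw [Real.norm_eq_abs]; exact hbound n a)
  have habs : ∀ n, ∀ᵐ a ∂μ, |(μ[h n|mz]) a| ≤ G n a := by
    intro n
    have hle1 : ∀ a, h n a ≤ H n a := fun a =>
      (le_abs_self _).trans (by simpa using le_ciSup (hbdd n a) 0)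
    have hle2 : ∀ a, -h n a ≤ H n a := fun a =>
      (neg_le_abs _).trans (by simpa using le_ciSup (hbdd n a) 0)
    have e1 : μ[h n|mz] ≤ᵐ[μ] μ[H n|mz] :=
      condExp_mono (hhint n) (hHint n) (Filter.Eventually.of_forall hle1)
    have e2 : μ[fun a => -h n a|mz] ≤ᵐ[μ] μ[H n|mz] :=
      condExp_mono (hhint n).neg (hHint n) (Filter.Eventually.of_forall hle2)
    have e3 : μ[fun a => -h n a|mz] =ᵐ[μ] fun a => -((μ[h n|mz]) a) := condExp_neg (h n) mz
    filter_upwards [e1, e2, e3] with a g1 g2 g3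
    rw [abs_le]
    refine ⟨?_, g1⟩
    rw [g3] at g2
    linarith [g2]
  filter_upwards [hGtend, ae_all_iff.2 habs] with a h1 h2
  exact squeeze_zero_norm (fun n => by simpa using h2 n) h1

/-- Conditional expectation of `f` given the sub-σ-algebra `m`, as a function. -/
noncomputable def ce {Ω : Type*} {m0 : MeasurableSpace Ω} (m : MeasurableSpace Ω)
    (μ : @Measure Ω m0) (f : Ω → ℝ) : Ω → ℝ := μ[f|m]

/-- Neyman orthogonality: with σ(z) ⊆ σ(x'), e = E[q'|x'], W = e − F'
(F' σ(x')-measurable), g continuously differentiable with bounded derivative, and δ an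
integrable σ(x')-measurable direction, define
M(λ) = E[A − g(W + λδ) − g'(W + λδ)·(q' − e − λδ) | z]. Then the Gateaux derivative of M
at λ = 0 is zero: along any nonzero sequence λₙ → 0, the difference quotients tend a.s. to 0. -/
theorem stmt11 {Ω : Type*} [mΩ : MeasurableSpace Ω] {μ : Measure Ω} [IsProbabilityMeasure μ]
    (mz mx : MeasurableSpace Ω) (hzx : mz ≤ mx) (hmx : mx ≤ mΩ)
    (q' A F' δ : Ω → ℝ) (hq' : Integrable q' μ) (hA : Integrable A μ)
    (hF' : StronglyMeasurable[mx] F') (hδm : StronglyMeasurable[mx] δ)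
    (hδ : Integrable δ μ)
    (g : ℝ → ℝ) (hg : ContDiff ℝ 1 g) (C : ℝ) (hg' : ∀ w, |deriv g w| ≤ C)
    (hgint : ∀ l : ℝ, Integrable (fun a => g (ce mx μ q' a - F' a + l * δ a)) μ)
    (M : ℝ → Ω → ℝ)
    (hM : ∀ l, M l = ce mz μ (fun a => A a - g (ce mx μ q' a - F' a + l * δ a)
        - deriv g (ce mx μ q' a - F' a + l * δ a)
            * (q' a - ce mx μ q' a - l * δ a))) :
    ∀ lseq : ℕ → ℝ, (∀ n, lseq n ≠ 0) → Tendsto lseq atTop (nhds 0) →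
      ∀ᵐ a ∂μ, Tendsto (fun n => (M (lseq n) a - M 0 a) / lseq n) atTop (nhds 0) := by
  intro lseq hne hlt
  have hC0 : 0 ≤ C := (abs_nonneg _).trans (hg' 0)
  have hgd : Differentiable ℝ g := hg.differentiable one_ne_zero
  have hg'c : Continuous (deriv g) := hg.continuous_deriv le_rfl
  have hlip : ∀ x y : ℝ, |g x - g y| ≤ C * |x - y| := by
    intro x y
    have := Convex.norm_image_sub_le_of_norm_deriv_le (s := Set.univ) (f := g)
      (fun z _ => hgd.differentiableAt) (fun z _ => hg' z) convex_univ
      (Set.mem_univ y) (Set.mem_univ x)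
    simpa [Real.norm_eq_abs] using this
  -- basic measurability/integrability of e := ce mx μ q'
  have hem : StronglyMeasurable[mx] (ce mx μ q') := stronglyMeasurable_condExp
  have heint : Integrable (ce mx μ q') μ := integrable_condExp
  set e := ce mx μ q' with hedef
  have hWm : StronglyMeasurable[mx] (fun a => e a - F' a) := hem.sub hF'
  have hXm : ∀ l : ℝ, StronglyMeasurable[mx] (fun a => e a - F' a + l * δ a) :=
    fun l => hWm.add (hδm.const_mul l)
  have hprojzero : μ[fun a => q' a - e a|mx] =ᵐ[μ] 0 := by
    have h1 : μ[fun a => q' a - e a|mx] =ᵐ[μ] μ[q'|mx] - μ[e|mx] := condExp_sub hq' heint mx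
    have h2 : μ[e|mx] = e := condExp_of_stronglyMeasurable hmx hem heint
    have h3 : μ[q'|mx] = e := rfl
    refine h1.trans ?_
    rw [h2, h3]
    simp
  -- the mx-measurable part ψ and the vanishing part v of the increment
  set ψ : ℝ → Ω → ℝ := fun l a => g (e a - F' a) - g (e a - F' a + l * δ a)
      + l * (deriv g (e a - F' a + l * δ a) * δ a) with hψdef
  set u : ℝ → Ω → ℝ := fun l a =>
      deriv g (e a - F' a) - deriv g (e a - F' a + l * δ a) with hudef
  set v : ℝ → Ω → ℝ := fun l a => u l a * (q' a - e a) with hvdef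
  set φ : ℝ → Ω → ℝ := fun l a => A a - g (e a - F' a + l * δ a)
      - deriv g (e a - F' a + l * δ a) * (q' a - e a - l * δ a) with hφdef
  have hgW : Integrable (fun a => g (e a - F' a)) μ := by
    have := hgint 0
    simpa using this
  have hq'e : Integrable (fun a => q' a - e a) μ := hq'.sub heint
  have huSM : ∀ l : ℝ, StronglyMeasurable[mx] (u l) := by
    intro l
    rw [hudef]
    exact (hg'c.comp_stronglyMeasurable hWm).sub (hg'c.comp_stronglyMeasurable (hXm l))
  have hubd : ∀ (l : ℝ) a, ‖u l a‖ ≤ C + C := by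
    intro l a
    rw [hudef, Real.norm_eq_abs]
    exact (abs_sub _ _).trans (add_le_add (hg' _) (hg' _))
  have hvint : ∀ l : ℝ, Integrable (v l) μ := by
    intro l
    rw [hvdef]
    exact hq'e.bdd_mul (((huSM l).mono hmx).aestronglyMeasurable) (Filter.Eventually.of_forall fun a => hubd l a)
  have hψint : ∀ l : ℝ, Integrable (ψ l) μ := by
    intro l
    rw [hψdef]
    refine (hgW.sub (hgint l)).add (Integrable.const_mul ?_ l)
    exact hδ.bdd_mul
      (((hg'c.comp_stronglyMeasurable (hXm l)).mono hmx).aestronglyMeasurable)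
      (Filter.Eventually.of_forall fun a => by rw [Real.norm_eq_abs]; exact hg' _)
  have hφint : ∀ l : ℝ, Integrable (φ l) μ := by
    intro l
    rw [hφdef]
    refine (hA.sub (hgint l)).sub ?_
    exact (hq'e.sub (hδ.const_mul l)).bdd_mul
      (((hg'c.comp_stronglyMeasurable (hXm l)).mono hmx).aestronglyMeasurable)
      (Filter.Eventually.of_forall fun a => by rw [Real.norm_eq_abs]; exact hg' _)
  have hsplit : ∀ (l : ℝ), (fun a => φ l a - φ 0 a) = fun a => ψ l a + v l a := by
    intro l
    funext a
    simp only [hφdef, hψdef, hvdef, hudef, zero_mul, add_zero, sub_zero]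
    ring
  have hM' : ∀ l : ℝ, M l = μ[φ l|mz] := by
    intro l
    rw [hM l, hφdef]
    rfl
  -- the vanishing part
  have hvzero : ∀ l : ℝ, μ[v l|mz] =ᵐ[μ] 0 := by
    intro l
    have t1 : μ[v l|mx] =ᵐ[μ] u l * μ[fun a => q' a - e a|mx] := by
      have h0 : Integrable (u l * fun a => q' a - e a) μ := hvint l
      exact condExp_mul_of_stronglyMeasurable_left (μ := μ) (huSM l) h0 hq'e
    have t2 : u l * μ[fun a => q' a - e a|mx] =ᵐ[μ] 0 := by
      filter_upwards [hprojzero] with a ha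
      simp only [Pi.mul_apply, Pi.zero_apply] at ha ⊢
      rw [ha, mul_zero]
    have t3 : μ[v l|mz] =ᵐ[μ] μ[μ[v l|mx]|mz] := (condExp_condExp_of_le hzx hmx).symm
    refine t3.trans ?_
    refine (condExp_congr_ae (t1.trans t2)).trans ?_
    rw [condExp_zero]
  -- increment identity
  have hkey : ∀ l : ℝ, μ[fun a => φ l a - φ 0 a|mz] =ᵐ[μ] μ[ψ l|mz] := by
    intro l
    rw [hsplit l]
    have hadd : μ[fun a => ψ l a + v l a|mz] =ᵐ[μ] μ[ψ l|mz] + μ[v l|mz] :=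
      condExp_add (hψint l) (hvint l) mz
    refine hadd.trans ?_
    filter_upwards [hvzero l] with a ha
    simp only [Pi.add_apply, Pi.zero_apply] at ha ⊢
    rw [ha, add_zero]
  -- the difference quotients are conditional expectations of (lseq n)⁻¹ • ψ (lseq n)
  have hquot : ∀ n, (fun a => (M (lseq n) a - M 0 a) / lseq n)
      =ᵐ[μ] μ[fun a => (lseq n)⁻¹ * ψ (lseq n) a|mz] := by
    intro n
    have d1 : μ[fun a => (lseq n)⁻¹ * ψ (lseq n) a|mz]
        =ᵐ[μ] (lseq n)⁻¹ • μ[ψ (lseq n)|mz] :=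
      condExp_smul (μ := μ) (m := mz) ((lseq n)⁻¹) (ψ (lseq n))
    have d2 : μ[ψ (lseq n)|mz] =ᵐ[μ] μ[φ (lseq n)|mz] - μ[φ 0|mz] := by
      refine (hkey (lseq n)).symm.trans ?_
      exact condExp_sub (hφint (lseq n)) (hφint 0) mz
    have d3 := d1.trans (d2.const_smul ((lseq n)⁻¹))
    refine Filter.EventuallyEq.symm ?_
    filter_upwards [d3] with a ha
    rw [ha, hM' (lseq n), hM' 0]
    simp only [Pi.smul_apply, Pi.sub_apply, smul_eq_mul]
    rw [div_eq_inv_mul]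
  -- measurability, domination, and pointwise convergence of the directions
  have hψSM : ∀ l : ℝ, StronglyMeasurable[mx] (ψ l) := by
    intro l
    rw [hψdef]
    exact ((hg.continuous.comp_stronglyMeasurable hWm).sub
        (hg.continuous.comp_stronglyMeasurable (hXm l))).add
      (((hg'c.comp_stronglyMeasurable (hXm l)).mul hδm).const_mul l)
  have hmeas : ∀ n, Measurable[mΩ] (fun a => (lseq n)⁻¹ * ψ (lseq n) a) := fun n =>
    (((hψSM (lseq n)).mono hmx).measurable).const_mul ((lseq n)⁻¹)
  have hb : Integrable (fun a => (2 * C) * |δ a|) μ := hδ.abs.const_mul (2 * C)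
  have hbound : ∀ n a, |(lseq n)⁻¹ * ψ (lseq n) a| ≤ (2 * C) * |δ a| := by
    intro n a
    have h1 : |g (e a - F' a) - g (e a - F' a + lseq n * δ a)|
        ≤ C * (|lseq n| * |δ a|) := by
      have h0 := hlip (e a - F' a) (e a - F' a + lseq n * δ a)
      have h2 : (e a - F' a) - (e a - F' a + lseq n * δ a) = -(lseq n * δ a) := by ring
      rw [h2, abs_neg, abs_mul] at h0
      exact h0
    have h3 : |lseq n * (deriv g (e a - F' a + lseq n * δ a) * δ a)|
        ≤ |lseq n| * (C * |δ a|) := by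
      rw [abs_mul, abs_mul]
      exact mul_le_mul_of_nonneg_left
        (mul_le_mul_of_nonneg_right (hg' _) (abs_nonneg _)) (abs_nonneg _)
    have h4 : |ψ (lseq n) a| ≤ |lseq n| * ((2 * C) * |δ a|) := by
      simp only [hψdef]
      refine (abs_add_le _ _).trans ?_
      calc _ ≤ C * (|lseq n| * |δ a|) + |lseq n| * (C * |δ a|) := add_le_add h1 h3
        _ = |lseq n| * ((2 * C) * |δ a|) := by ring
    have hl : |lseq n| ≠ 0 := abs_ne_zero.mpr (hne n)
    rw [abs_mul, abs_inv]
    calc |lseq n|⁻¹ * |ψ (lseq n) a|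
        ≤ |lseq n|⁻¹ * (|lseq n| * ((2 * C) * |δ a|)) :=
          mul_le_mul_of_nonneg_left h4 (by positivity)
      _ = (2 * C) * |δ a| := by field_simp
  have hlimpt : ∀ a, Tendsto (fun n => (lseq n)⁻¹ * ψ (lseq n) a) atTop (nhds 0) := by
    intro a
    by_cases hda : δ a = 0
    · have hz : ∀ n, (lseq n)⁻¹ * ψ (lseq n) a = 0 := fun n => by
        simp [hψdef, hda]
      simp only [hz]
      exact tendsto_const_nhds
    · set w := e a - F' a with hw
      have hs : Tendsto (fun n => lseq n * δ a) atTop (nhds 0) := by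
        simpa using hlt.mul_const (δ a)
      have hX : Tendsto (fun n => w + lseq n * δ a) atTop (nhds w) := by
        simpa using tendsto_const_nhds.add hs
      have hterm2 : Tendsto (fun n => deriv g (w + lseq n * δ a) * δ a) atTop
          (nhds (deriv g w * δ a)) := ((hg'c.tendsto w).comp hX).mul_const _
      have hd : HasDerivAt g (deriv g w) w := (hgd w).hasDerivAt
      have hslope0 := hasDerivAt_iff_tendsto_slope.mp hd
      have hmem : ∀ n, w + lseq n * δ a ∈ {x : ℝ | x ≠ w} := fun n => by
        simp [mul_ne_zero (hne n) hda]
      have hXne : Tendsto (fun n => w + lseq n * δ a) atTop (nhdsWithin w {x | x ≠ w}) :=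
        tendsto_nhdsWithin_of_tendsto_nhds_of_eventually_within _ hX
          (Filter.Eventually.of_forall hmem)
      have hslope : Tendsto (fun n => (g (w + lseq n * δ a) - g w) / (lseq n * δ a))
          atTop (nhds (deriv g w)) := by
        refine (hslope0.comp hXne).congr fun n => ?_
        simp only [Function.comp_apply, slope_def_field, add_sub_cancel_left]
      have hterm1 : Tendsto (fun n => (g (w + lseq n * δ a) - g w) / lseq n) atTop
          (nhds (deriv g w * δ a)) := by
        refine (hslope.mul_const (δ a)).congr fun n => ?_
        field_simp [hda, hne n]
      have hfinal : Tendsto (fun n => (lseq n)⁻¹ * ψ (lseq n) a) atTop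
          (nhds (-(deriv g w * δ a) + deriv g w * δ a)) := by
        refine (hterm1.neg.add hterm2).congr fun n => ?_
        simp only [hψdef, ← hw]
        field_simp [hne n]
        ring
      simpa using hfinal
  have hALL := @aux_condexp_tendsto Ω mz mΩ μ ‹IsProbabilityMeasure μ› (hzx.trans hmx)
    (fun n a => (lseq n)⁻¹ * ψ (lseq n) a) hmeas _ hb hbound hlimpt
  filter_upwards [hALL, ae_all_iff.2 hquot] with a h1 h2
  exact h1.congr fun n => (h2 n).symm
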